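/- Let $(\mathfrak{g},J,g)$ be a $2n$-dimensional Lie algebra with Hermitian structure, and let $\{e_1,\ldots,e_{2n}\}$ be an orthonormal basis. For any $X\in\mathfrak{g}$, the codifferential of the fundamental form $F(\cdot,\cdot)=g(\cdot,J\cdot)$ satisfies $d^*F(X)=\operatorname{tr}(\operatorname{ad}_{JX})-\tfrac12\, g\big(\sum_{i=1}^{2n}[Je_i,e_i],\,X\big)$. -/

import Mathlib

/-- On a `2n`-dimensional Lie algebra with Hermitian structure `(J, g)` and
orthonormal basis `e₁, …, e_{2n}`, the codifferential of the fundamental form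
`F(X,Y) = g(X, JY)` satisfies
`d*F(X) = tr(ad_{JX}) - (1/2) g(∑ᵢ ⁅J eᵢ, eᵢ⁆, X)`,
where `d*F(X) = -∑ᵢ (∇^g_{eᵢ} F)(eᵢ, X)`, `∇^g` being the Levi-Civita connection. -/
theorem codifferential_formula {L : Type*} [LieRing L] [LieAlgebra ℝ L]
    [Module.Finite ℝ L] (n : ℕ)
    (g : L →ₗ[ℝ] L →ₗ[ℝ] ℝ) (hsymm : ∀ x y, g x y = g y x)
    (J : L →ₗ[ℝ] L) (hJ2 : ∀ x, J (J x) = -x)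
    (hN : ∀ x y : L, ⁅J x, J y⁆ - J ⁅J x, y⁆ - J ⁅x, J y⁆ - ⁅x, y⁆ = 0)
    (hcomp : ∀ x y, g (J x) (J y) = g x y)
    (e : Module.Basis (Fin (2 * n)) ℝ L)
    (honb : ∀ i j, g (e i) (e j) = if i = j then (1 : ℝ) else 0)
    (nab : L → L → L)
    (hKoszul : ∀ X Y Z : L,
      2 * g (nab X Y) Z = g ⁅X, Y⁆ Z - g ⁅Y, Z⁆ X + g ⁅Z, X⁆ Y)
    (F : L → L → ℝ) (hF : ∀ X Y, F X Y = g X (J Y))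
    (X : L) :
    -∑ i, (-F (nab (e i) (e i)) X - F (e i) (nab (e i) X)) =
      LinearMap.trace ℝ L (LieAlgebra.ad ℝ L (J X)) -
        (1 / 2) * g (∑ i, ⁅J (e i), e i⁆) X := by
  classical
  -- g(u, Jv) = -g(Ju, v)
  have hgJ : ∀ u v : L, g u (J v) = - g (J u) v := by
    intro u v
    rw [← hcomp u (J v), hJ2, map_neg]
  have hrepr : ∀ (v : L) (i : Fin (2 * n)), e.repr v i = g v (e i) := by
    intro v i
    conv_rhs => rw [← Module.Basis.sum_repr e v]
    rw [map_sum, LinearMap.sum_apply]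
    simp only [map_smul, LinearMap.smul_apply, honb, smul_eq_mul, mul_ite, mul_one, mul_zero]
    simp
  have htr : ∀ A : L →ₗ[ℝ] L, LinearMap.trace ℝ L A = ∑ i, g (A (e i)) (e i) := by
    intro A
    rw [LinearMap.trace_eq_matrix_trace ℝ e A, Matrix.trace]
    simp [Matrix.diag, LinearMap.toMatrix_apply, hrepr]
  -- key cancellation: ∑ g([e i, X], J e i) = ∑ g([X, J e i], e i)
  have hkey : ∑ i, g ⁅e i, X⁆ (J (e i)) = ∑ i, g ⁅X, J (e i)⁆ (e i) := by
    have h2 := LinearMap.trace_mul_comm ℝ J (LieAlgebra.ad ℝ L X)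
    rw [htr, htr] at h2
    calc ∑ i, g ⁅e i, X⁆ (J (e i))
        = ∑ i, g ((J * LieAlgebra.ad ℝ L X) (e i)) (e i) := by
          refine Finset.sum_congr rfl fun i _ => ?_
          rw [hgJ]
          have h3 : (⁅e i, X⁆ : L) = -⁅X, e i⁆ := by rw [← lie_skew]
          rw [h3, map_neg, map_neg, LinearMap.neg_apply, neg_neg]
          rfl
      _ = ∑ i, g ((LieAlgebra.ad ℝ L X * J) (e i)) (e i) := h2
      _ = ∑ i, g ⁅X, J (e i)⁆ (e i) := rfl
  have hnab1 : ∀ i, F (nab (e i) (e i)) X = g ⁅J X, e i⁆ (e i) := by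
    intro i
    have hk := hKoszul (e i) (e i) (J X)
    have h3 : (⁅e i, J X⁆ : L) = -⁅J X, e i⁆ := by rw [← lie_skew]
    rw [lie_self, map_zero, LinearMap.zero_apply, h3, map_neg, LinearMap.neg_apply] at hk
    rw [hF]
    linarith
  have hnab2 : ∀ i, F (e i) (nab (e i) X)
      = -(1/2) * (g ⁅e i, X⁆ (J (e i)) - g ⁅X, J (e i)⁆ (e i) + g ⁅J (e i), e i⁆ X) := by
    intro i
    have hk := hKoszul (e i) X (J (e i))
    rw [hF, hgJ, hsymm (J (e i)) (nab (e i) X)]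
    linarith
  have expand : -∑ i, (-F (nab (e i) (e i)) X - F (e i) (nab (e i) X))
      = ∑ i, g ⁅J X, e i⁆ (e i)
        - (1/2) * ∑ i, (g ⁅e i, X⁆ (J (e i)) - g ⁅X, J (e i)⁆ (e i) + g ⁅J (e i), e i⁆ X) := by
    rw [Finset.mul_sum, ← Finset.sum_sub_distrib, ← Finset.sum_neg_distrib]
    refine Finset.sum_congr rfl fun i _ => ?_
    rw [hnab1 i, hnab2 i]; ring
  rw [expand, htr]
  have hsum2 : g (∑ i, ⁅J (e i), e i⁆) X = ∑ i, g ⁅J (e i), e i⁆ X := by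
    rw [map_sum, LinearMap.sum_apply]
  rw [hsum2]
  have : ∑ i, (g ⁅e i, X⁆ (J (e i)) - g ⁅X, J (e i)⁆ (e i) + g ⁅J (e i), e i⁆ X)
      = ∑ i, g ⁅J (e i), e i⁆ X := by
    rw [Finset.sum_add_distrib, Finset.sum_sub_distrib, hkey]
    ring
  rw [this]
  simp only [LieAlgebra.ad_apply]
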